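/- Let m > 0 and σ > 0, and define Ψ : ℝ × ℝ → ℂ by Ψ(a,t) = (128σ³/π)^{1/4} · exp((3/2)·Log(m/(m + 2iσt))) · a · exp(-σ m a²/(m + 2iσt)), where Log is the principal branch of the complex logarithm (well defined since m + 2iσt has positive real part). Then: (i) Ψ satisfies the free Schrödinger equation i ∂Ψ/∂t (a,t) = -(1/(2m)) ∂²Ψ/∂a² (a,t) for all (a,t) ∈ ℝ²; (ii) Ψ(a,0) = (128σ³/π)^{1/4} a e^{-σa²} for all a; (iii) Ψ(0,t) = 0 for all t (Dirichlet boundary condition at a = 0). -/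

import Mathlib

set_option maxHeartbeats 800000



private lemma hl_aux1 (m σ : ℝ) (Z : ℂ) (hz : Z ≠ 0) (hm0 : (m:ℂ) ≠ 0) :
    (0 * Z - (m:ℂ) * (2*Complex.I*(σ:ℂ))) / Z^2 / ((m:ℂ)/Z) = -(2*Complex.I*(σ:ℂ))/Z := by
  field_simp
  ring

private lemma hl_aux2 (m σ a : ℝ) (Z : ℂ) (hz : Z ≠ 0) :
    (0 * Z - (-(σ:ℂ)*(m:ℂ)*(a:ℂ)^2) * (2*Complex.I*(σ:ℂ))) / Z^2
      = 2*Complex.I*(σ:ℂ)^2*(m:ℂ)*(a:ℂ)^2/Z^2 := by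
  field_simp
  ring

private lemma hl_final (m σ a : ℝ) (C W E Z : ℂ) (hz : Z ≠ 0) (hm0 : (m:ℂ) ≠ 0) :
    Complex.I * (-Complex.I * (C * W * E * (a:ℂ)
        * (3*(σ:ℂ)/Z - 2*(σ:ℂ)^2*(m:ℂ)*(a:ℂ)^2/Z^2)))
      = -(1/(2*(m:ℂ))) * (C * W * E
        * (4*(σ:ℂ)^2*(m:ℂ)^2*(a:ℂ)^3/Z^2 - 6*(σ:ℂ)*(m:ℂ)*(a:ℂ)/Z)) := by
  rw [← mul_assoc]
  rw [show Complex.I * -Complex.I = 1 by simp [Complex.I_mul_I]]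
  rw [one_mul]
  field_simp
  ring

/-- The evolved Gaussian wave packet of the flat Hořava–Lifshitz quantum universe:
`Ψ(a,t) = (128σ³/π)^{1/4} (m/(m+2iσt))^{3/2} a exp(-σma²/(m+2iσt))` (principal branch)
satisfies (i) the free Schrödinger equation `i ∂Ψ/∂t = -(1/(2m)) ∂²Ψ/∂a²`,
(ii) the initial condition `Ψ(a,0) = (128σ³/π)^{1/4} a e^{-σa²}`, and
(iii) the Dirichlet boundary condition `Ψ(0,t) = 0`. -/
theorem flat_universe_wave_packet (m σ : ℝ) (hm : 0 < m) (hσ : 0 < σ)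
    (Ψ : ℝ → ℝ → ℂ)
    (hΨ : ∀ a t : ℝ, Ψ a t
      = (((128*σ^3/Real.pi) ^ ((1:ℝ)/4) : ℝ) : ℂ)
        * Complex.exp ((3/2) * Complex.log ((m:ℂ)/((m:ℂ) + 2*Complex.I*(σ:ℂ)*(t:ℂ))))
        * (a:ℂ)
        * Complex.exp (-(σ:ℂ)*(m:ℂ)*(a:ℂ)^2/((m:ℂ) + 2*Complex.I*(σ:ℂ)*(t:ℂ)))) :
    (∀ a t : ℝ, Complex.I * deriv (fun t' => Ψ a t') t
        = -(1/(2*(m:ℂ))) * deriv (deriv (fun a' => Ψ a' t)) a) ∧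
    (∀ a : ℝ, Ψ a 0 = (((128*σ^3/Real.pi) ^ ((1:ℝ)/4) : ℝ) : ℂ) * (a:ℂ)
        * Complex.exp (-(σ:ℂ)*(a:ℂ)^2)) ∧
    (∀ t : ℝ, Ψ 0 t = 0) := by
  have hm0 : (m:ℂ) ≠ 0 := by exact_mod_cast hm.ne'
  set C : ℂ := (((128*σ^3/Real.pi) ^ ((1:ℝ)/4) : ℝ) : ℂ) with hC
  -- nonvanishing of the denominator
  have hz0 : ∀ t : ℝ, ((m:ℂ) + 2*Complex.I*(σ:ℂ)*(t:ℂ)) ≠ 0 := by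
    intro t h
    have h2 : ((m:ℂ) + 2*Complex.I*(σ:ℂ)*(t:ℂ)).re = m := by simp
    rw [h, Complex.zero_re] at h2
    exact hm.ne' h2.symm
  have hslit : ∀ t : ℝ, (m:ℂ) / ((m:ℂ) + 2*Complex.I*(σ:ℂ)*(t:ℂ)) ∈ Complex.slitPlane := by
    intro t
    rw [Complex.mem_slitPlane_iff]
    left
    rw [Complex.div_re]
    have h1 : (0:ℝ) < Complex.normSq ((m:ℂ) + 2*Complex.I*(σ:ℂ)*(t:ℂ)) :=
      Complex.normSq_pos.2 (hz0 t)
    simp only [Complex.ofReal_re, Complex.ofReal_im, zero_mul, zero_div, add_zero]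
    have h2 : ((m:ℂ) + 2*Complex.I*(σ:ℂ)*(t:ℂ)).re = m := by simp
    rw [h2]
    exact div_pos (mul_pos hm hm) h1
  have hz' : ∀ t : ℝ, HasDerivAt (fun t' : ℝ => (m:ℂ) + 2*Complex.I*(σ:ℂ)*(t':ℂ))
      (2*Complex.I*(σ:ℂ)) t := by
    intro t
    have h1 : HasDerivAt (fun y : ℝ => ((y:ℝ):ℂ)) 1 t := by
      simpa using (hasDerivAt_id t).ofReal_comp
    simpa using (h1.const_mul (2*Complex.I*(σ:ℂ))).const_add (m:ℂ)
  have hofreal : ∀ x : ℝ, HasDerivAt (fun y : ℝ => ((y:ℝ):ℂ)) 1 x := by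
    intro x
    simpa using (hasDerivAt_id x).ofReal_comp
  have hsq : ∀ x : ℝ, HasDerivAt (fun y : ℝ => ((y:ℝ):ℂ)^2) (2*(x:ℂ)) x := by
    intro x
    have h := (hofreal x).mul (hofreal x)
    simp only [pow_two]
    convert h using 1
    all_goals first | rfl | ring
  -- time derivative
  have keyT : ∀ a t : ℝ, HasDerivAt (fun t' : ℝ =>
      C * Complex.exp ((3/2) * Complex.log ((m:ℂ)/((m:ℂ) + 2*Complex.I*(σ:ℂ)*(t':ℂ))))
        * (a:ℂ) * Complex.exp (-(σ:ℂ)*(m:ℂ)*(a:ℂ)^2/((m:ℂ) + 2*Complex.I*(σ:ℂ)*(t':ℂ))))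
      (-Complex.I * (C * Complex.exp ((3/2) * Complex.log ((m:ℂ)/((m:ℂ) + 2*Complex.I*(σ:ℂ)*(t:ℂ))))
        * Complex.exp (-(σ:ℂ)*(m:ℂ)*(a:ℂ)^2/((m:ℂ) + 2*Complex.I*(σ:ℂ)*(t:ℂ))) * (a:ℂ)
        * (3*(σ:ℂ)/((m:ℂ) + 2*Complex.I*(σ:ℂ)*(t:ℂ))
           - 2*(σ:ℂ)^2*(m:ℂ)*(a:ℂ)^2/((m:ℂ) + 2*Complex.I*(σ:ℂ)*(t:ℂ))^2))) t := by
    intro a t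
    have hdiv : HasDerivAt (fun t' : ℝ => (m:ℂ) / ((m:ℂ) + 2*Complex.I*(σ:ℂ)*(t':ℂ)))
        ((0 * ((m:ℂ) + 2*Complex.I*(σ:ℂ)*(t:ℂ)) - (m:ℂ) * (2*Complex.I*(σ:ℂ)))
          / ((m:ℂ) + 2*Complex.I*(σ:ℂ)*(t:ℂ))^2) t :=
      (hasDerivAt_const t (m:ℂ)).div (hz' t) (hz0 t)
    have hlog := hdiv.clog_real (hslit t)
    rw [hl_aux1 m σ _ (hz0 t) hm0] at hlog
    have hW := (hlog.const_mul ((3:ℂ)/2)).cexp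
    have hinner : HasDerivAt (fun t' : ℝ =>
        -(σ:ℂ)*(m:ℂ)*(a:ℂ)^2 / ((m:ℂ) + 2*Complex.I*(σ:ℂ)*(t':ℂ)))
        ((0 * ((m:ℂ) + 2*Complex.I*(σ:ℂ)*(t:ℂ)) - (-(σ:ℂ)*(m:ℂ)*(a:ℂ)^2) * (2*Complex.I*(σ:ℂ)))
          / ((m:ℂ) + 2*Complex.I*(σ:ℂ)*(t:ℂ))^2) t :=
      (hasDerivAt_const t _).div (hz' t) (hz0 t)
    rw [hl_aux2 m σ a _ (hz0 t)] at hinner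
    have hE := hinner.cexp
    have hfull := ((hW.const_mul C).mul_const ((a:ℂ))).mul hE
    convert hfull using 1
    all_goals first | rfl | ring
  -- first spatial derivative
  have keyA : ∀ (t x : ℝ), HasDerivAt (fun a' : ℝ =>
      C * Complex.exp ((3/2) * Complex.log ((m:ℂ)/((m:ℂ) + 2*Complex.I*(σ:ℂ)*(t:ℂ))))
        * (a':ℂ) * Complex.exp (-(σ:ℂ)*(m:ℂ)*(a':ℂ)^2/((m:ℂ) + 2*Complex.I*(σ:ℂ)*(t:ℂ))))
      (C * Complex.exp ((3/2) * Complex.log ((m:ℂ)/((m:ℂ) + 2*Complex.I*(σ:ℂ)*(t:ℂ))))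
        * Complex.exp (-(σ:ℂ)*(m:ℂ)*(x:ℂ)^2/((m:ℂ) + 2*Complex.I*(σ:ℂ)*(t:ℂ)))
        * (1 - 2*(σ:ℂ)*(m:ℂ)*(x:ℂ)^2/((m:ℂ) + 2*Complex.I*(σ:ℂ)*(t:ℂ)))) x := by
    intro t x
    have hinner : HasDerivAt (fun a' : ℝ =>
        -(σ:ℂ)*(m:ℂ)*(a':ℂ)^2 / ((m:ℂ) + 2*Complex.I*(σ:ℂ)*(t:ℂ)))
        ((-(σ:ℂ)*(m:ℂ) * (2 * (x:ℂ))) / ((m:ℂ) + 2*Complex.I*(σ:ℂ)*(t:ℂ))) x :=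
      ((hsq x).const_mul (-(σ:ℂ)*(m:ℂ))).div_const _
    have hE := hinner.cexp
    have hlin : HasDerivAt (fun a' : ℝ =>
        C * Complex.exp ((3/2) * Complex.log ((m:ℂ)/((m:ℂ) + 2*Complex.I*(σ:ℂ)*(t:ℂ)))) * (a':ℂ))
        (C * Complex.exp ((3/2) * Complex.log ((m:ℂ)/((m:ℂ) + 2*Complex.I*(σ:ℂ)*(t:ℂ))))) x := by
      simpa using (hofreal x).const_mul
        (C * Complex.exp ((3/2) * Complex.log ((m:ℂ)/((m:ℂ) + 2*Complex.I*(σ:ℂ)*(t:ℂ)))))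
    have hfull := hlin.mul hE
    convert hfull using 1
    all_goals first | rfl | ring
  -- second spatial derivative
  have keyA2 : ∀ (t a : ℝ), HasDerivAt (fun x : ℝ =>
      C * Complex.exp ((3/2) * Complex.log ((m:ℂ)/((m:ℂ) + 2*Complex.I*(σ:ℂ)*(t:ℂ))))
        * Complex.exp (-(σ:ℂ)*(m:ℂ)*(x:ℂ)^2/((m:ℂ) + 2*Complex.I*(σ:ℂ)*(t:ℂ)))
        * (1 - 2*(σ:ℂ)*(m:ℂ)*(x:ℂ)^2/((m:ℂ) + 2*Complex.I*(σ:ℂ)*(t:ℂ))))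
      (C * Complex.exp ((3/2) * Complex.log ((m:ℂ)/((m:ℂ) + 2*Complex.I*(σ:ℂ)*(t:ℂ))))
        * Complex.exp (-(σ:ℂ)*(m:ℂ)*(a:ℂ)^2/((m:ℂ) + 2*Complex.I*(σ:ℂ)*(t:ℂ)))
        * (4*(σ:ℂ)^2*(m:ℂ)^2*(a:ℂ)^3/((m:ℂ) + 2*Complex.I*(σ:ℂ)*(t:ℂ))^2
           - 6*(σ:ℂ)*(m:ℂ)*(a:ℂ)/((m:ℂ) + 2*Complex.I*(σ:ℂ)*(t:ℂ)))) a := by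
    intro t a
    have hinner : HasDerivAt (fun a' : ℝ =>
        -(σ:ℂ)*(m:ℂ)*(a':ℂ)^2 / ((m:ℂ) + 2*Complex.I*(σ:ℂ)*(t:ℂ)))
        ((-(σ:ℂ)*(m:ℂ) * (2 * (a:ℂ))) / ((m:ℂ) + 2*Complex.I*(σ:ℂ)*(t:ℂ))) a :=
      ((hsq a).const_mul (-(σ:ℂ)*(m:ℂ))).div_const _
    have hE := (hinner.cexp).const_mul
      (C * Complex.exp ((3/2) * Complex.log ((m:ℂ)/((m:ℂ) + 2*Complex.I*(σ:ℂ)*(t:ℂ)))))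
    have hq : HasDerivAt (fun x : ℝ =>
        1 - 2*(σ:ℂ)*(m:ℂ)*(x:ℂ)^2/((m:ℂ) + 2*Complex.I*(σ:ℂ)*(t:ℂ)))
        (-((2*(σ:ℂ)*(m:ℂ) * (2 * (a:ℂ))) / ((m:ℂ) + 2*Complex.I*(σ:ℂ)*(t:ℂ)))) a :=
      (((hsq a).const_mul (2*(σ:ℂ)*(m:ℂ))).div_const _).const_sub 1
    have hfull := hE.mul hq
    convert hfull using 1
    all_goals try generalize (m:ℂ) + 2*Complex.I*(σ:ℂ)*(t:ℂ) = Z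
    all_goals first | rfl | ring
  refine ⟨?_, ?_, ?_⟩
  · intro a t
    have hfunT : (fun t' => Ψ a t') = fun t' : ℝ =>
        C * Complex.exp ((3/2) * Complex.log ((m:ℂ)/((m:ℂ) + 2*Complex.I*(σ:ℂ)*(t':ℂ))))
          * (a:ℂ) * Complex.exp (-(σ:ℂ)*(m:ℂ)*(a:ℂ)^2/((m:ℂ) + 2*Complex.I*(σ:ℂ)*(t':ℂ))) :=
      funext fun t' => hΨ a t'
    have hfunA : (fun a' => Ψ a' t) = fun a' : ℝ =>
        C * Complex.exp ((3/2) * Complex.log ((m:ℂ)/((m:ℂ) + 2*Complex.I*(σ:ℂ)*(t:ℂ))))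
          * (a':ℂ) * Complex.exp (-(σ:ℂ)*(m:ℂ)*(a':ℂ)^2/((m:ℂ) + 2*Complex.I*(σ:ℂ)*(t:ℂ))) :=
      funext fun a' => hΨ a' t
    rw [hfunT, (keyT a t).deriv, hfunA]
    rw [show deriv (fun a' : ℝ =>
        C * Complex.exp ((3/2) * Complex.log ((m:ℂ)/((m:ℂ) + 2*Complex.I*(σ:ℂ)*(t:ℂ))))
          * (a':ℂ) * Complex.exp (-(σ:ℂ)*(m:ℂ)*(a':ℂ)^2/((m:ℂ) + 2*Complex.I*(σ:ℂ)*(t:ℂ))))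
      = fun x : ℝ =>
        C * Complex.exp ((3/2) * Complex.log ((m:ℂ)/((m:ℂ) + 2*Complex.I*(σ:ℂ)*(t:ℂ))))
          * Complex.exp (-(σ:ℂ)*(m:ℂ)*(x:ℂ)^2/((m:ℂ) + 2*Complex.I*(σ:ℂ)*(t:ℂ)))
          * (1 - 2*(σ:ℂ)*(m:ℂ)*(x:ℂ)^2/((m:ℂ) + 2*Complex.I*(σ:ℂ)*(t:ℂ)))
      from funext fun x => (keyA t x).deriv]
    rw [(keyA2 t a).deriv]
    exact hl_final m σ a C _ _ _ (hz0 t) hm0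
  · intro a
    rw [hΨ a 0]
    have h1 : (m:ℂ) + 2*Complex.I*(σ:ℂ)*((0:ℝ):ℂ) = m := by push_cast; ring
    rw [h1, div_self hm0, Complex.log_one, mul_zero, Complex.exp_zero]
    rw [show -(σ:ℂ)*(m:ℂ)*(a:ℂ)^2/(m:ℂ) = -(σ:ℂ)*(a:ℂ)^2 from by field_simp]
    ring
  · intro t
    rw [hΨ 0 t]
    simp
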